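/- Among the four graphs C_3 □ C_3, K_{1,3} □ P_3, K_{2,3} □ P_2, and K_4 □ P_2, no one of them is a minor of any other: for any two distinct graphs G and G' from this list, G' is not a minor of G. (This is the necessity part of the paper's Proposition on forbidden Cartesian product minors for planarity.) -/

import Mathlib

/-- `H` is a minor of `G`: there is an assignment of pairwise disjoint, connected,
nonempty branch sets in `G` to the vertices of `H`, with an edge of `G` between the
branch sets of any two adjacent vertices of `H`. -/
def SimpleGraph.IsMinorOf {W V : Type*} (H : SimpleGraph W) (G : SimpleGraph V) : Prop :=
  ∃ φ : W → Set V,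
    (∀ w, (G.induce (φ w)).Connected) ∧
    (Pairwise fun w w' => Disjoint (φ w) (φ w')) ∧
    ∀ ⦃w w'⦄, H.Adj w w' → ∃ a ∈ φ w, ∃ b ∈ φ w', G.Adj a b

/-- `C_3 □ C_3`. -/
abbrev GraphA : SimpleGraph (Fin 3 × Fin 3) :=
  (SimpleGraph.cycleGraph 3) □ (SimpleGraph.cycleGraph 3)

/-- `K_{1,3} □ P_3`. -/
abbrev GraphB : SimpleGraph ((Fin 1 ⊕ Fin 3) × Fin 3) :=
  (completeBipartiteGraph (Fin 1) (Fin 3)) □ (SimpleGraph.pathGraph 3)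

/-- `K_{2,3} □ P_2`. -/
abbrev GraphC : SimpleGraph ((Fin 2 ⊕ Fin 3) × Fin 2) :=
  (completeBipartiteGraph (Fin 2) (Fin 3)) □ (SimpleGraph.pathGraph 2)

/-- `K_4 □ P_2`. -/
abbrev GraphD : SimpleGraph (Fin 4 × Fin 2) :=
  (SimpleGraph.completeGraph (Fin 4)) □ (SimpleGraph.pathGraph 2)

/-! ### Decidability instances for the concrete graphs -/

instance pathAdjDec (n : ℕ) : DecidableRel (SimpleGraph.pathGraph n).Adj :=
  fun _ _ => decidable_of_iff _ SimpleGraph.pathGraph_adj.symm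

instance boxAdjDec {α β : Type*} [DecidableEq α] [DecidableEq β]
    (G : SimpleGraph α) (H : SimpleGraph β) [DecidableRel G.Adj] [DecidableRel H.Adj] :
    DecidableRel (G □ H).Adj :=
  fun _ _ => decidable_of_iff _ SimpleGraph.boxProd_adj.symm

instance cbgAdjDec {α β : Type*} : DecidableRel (completeBipartiteGraph α β).Adj :=
  fun _ _ => inferInstanceAs (Decidable (_ ∨ _))

instance cgAdjDec {α : Type*} [DecidableEq α] : DecidableRel (SimpleGraph.completeGraph α).Adj :=
  fun v w => inferInstanceAs (Decidable (v ≠ w))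

/-! ### Generic lemmas about minors -/

set_option linter.unusedSectionVars false
set_option maxHeartbeats 1600000

open SimpleGraph Finset

namespace MinorAux

variable {W V : Type*} [Fintype W] [Fintype V] [DecidableEq W] [DecidableEq V]
variable {H : SimpleGraph W} {G : SimpleGraph V} {φ : W → Set V}

lemma branch_nonempty (hconn : ∀ w, (G.induce (φ w)).Connected) (w : W) : (φ w).Nonempty := by
  obtain ⟨⟨v, hv⟩⟩ := (hconn w).nonempty
  exact ⟨v, hv⟩

lemma mem_unique (hdisj : Pairwise fun w w' => Disjoint (φ w) (φ w')) {v : V} {w w' : W}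
    (h1 : v ∈ φ w) (h2 : v ∈ φ w') : w = w' := by
  by_contra hne
  exact Set.disjoint_left.1 (hdisj hne) h1 h2

/-- The finset version of a branch set. -/
noncomputable def F (φ : W → Set V) (w : W) : Finset V := (φ w).toFinite.toFinset

lemma mem_F {v : V} {w : W} : v ∈ F φ w ↔ v ∈ φ w := Set.Finite.mem_toFinset _

lemma sum_card_le (hdisj : Pairwise fun w w' => Disjoint (φ w) (φ w')) :
    ∑ w, (F φ w).card ≤ Fintype.card V := by
  calc ∑ w, (F φ w).card = (Finset.univ.biUnion (F φ)).card :=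
        (Finset.card_biUnion (fun w _ w' _ hne =>
          Set.Finite.disjoint_toFinset.2 (hdisj hne))).symm
    _ ≤ Fintype.card V := Finset.card_le_card (Finset.subset_univ _)

lemma one_le_card (hconn : ∀ w, (G.induce (φ w)).Connected) (w : W) : 1 ≤ (F φ w).card :=
  Finset.card_pos.2 (by obtain ⟨v, hv⟩ := branch_nonempty hconn w; exact ⟨v, mem_F.2 hv⟩)

lemma eq_singleton_of_card_one {w : W} (h : (F φ w).card = 1) : ∃ v, φ w = {v} := by
  obtain ⟨v, hv⟩ := Finset.card_eq_one.1 h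
  refine ⟨v, ?_⟩
  rw [← (φ w).toFinite.coe_toFinset]
  show ((F φ w : Finset V) : Set V) = _
  rw [hv, Finset.coe_singleton]

lemma eq_pair_of_card_two {w : W} (h : (F φ w).card = 2) :
    ∃ a b, a ≠ b ∧ φ w = {a, b} := by
  obtain ⟨a, b, hab, hv⟩ := Finset.card_eq_two.1 h
  refine ⟨a, b, hab, ?_⟩
  rw [← (φ w).toFinite.coe_toFinset]
  show ((F φ w : Finset V) : Set V) = _
  rw [hv]
  simp

/-- Neighbor selection map: if the branch set of `w` is the singleton `{v}`, the
neighbors of `w` in `H` are injectively represented inside `G`-neighbors of `v`. -/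
lemma nbr_map [DecidableRel G.Adj] [DecidableRel H.Adj]
    (hdisj : Pairwise fun w w' => Disjoint (φ w) (φ w'))
    (hadj : ∀ ⦃w w'⦄, H.Adj w w' → ∃ a ∈ φ w, ∃ b ∈ φ w', G.Adj a b)
    {w : W} {v : V} (hv : φ w = {v}) :
    ∃ f : W → V, (∀ w' ∈ H.neighborFinset w, f w' ∈ φ w' ∧ f w' ∈ G.neighborFinset v) ∧
      Set.InjOn f (H.neighborFinset w) := by
  have key : ∀ w' : W, w' ∈ H.neighborFinset w → ∃ b, b ∈ φ w' ∧ G.Adj v b := by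
    intro w' hw'
    rw [mem_neighborFinset] at hw'
    obtain ⟨a, ha, b, hb, hab⟩ := hadj hw'
    rw [hv, Set.mem_singleton_iff] at ha
    subst ha
    exact ⟨b, hb, hab⟩
  classical
  refine ⟨fun w' => if h : w' ∈ H.neighborFinset w then (key w' h).choose else v, ?_, ?_⟩
  · intro w' hw'
    simp only [dif_pos hw']
    obtain ⟨h1, h2⟩ := (key w' hw').choose_spec
    exact ⟨h1, by rwa [mem_neighborFinset]⟩
  · intro w1 h1 w2 h2 heq
    simp only [Finset.coe_sort_coe, Finset.mem_coe] at h1 h2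
    simp only [dif_pos h1, dif_pos h2] at heq
    exact mem_unique hdisj (key w1 h1).choose_spec.1 (heq ▸ (key w2 h2).choose_spec.1)

lemma degree_le_of_singleton [DecidableRel G.Adj] [DecidableRel H.Adj]
    (hdisj : Pairwise fun w w' => Disjoint (φ w) (φ w'))
    (hadj : ∀ ⦃w w'⦄, H.Adj w w' → ∃ a ∈ φ w, ∃ b ∈ φ w', G.Adj a b)
    {w : W} {v : V} (hv : φ w = {v}) : H.degree w ≤ G.degree v := by
  obtain ⟨f, hf, hinj⟩ := nbr_map hdisj hadj hv
  rw [← card_neighborFinset_eq_degree, ← card_neighborFinset_eq_degree]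
  exact Finset.card_le_card_of_injOn f (fun w' hw' => (hf w' hw').2) hinj

/-- A minor has at most as many vertices as the host graph. -/
lemma card_le_of_minor (h : H.IsMinorOf G) : Fintype.card W ≤ Fintype.card V := by
  obtain ⟨φ, hconn, hdisj, _⟩ := h
  calc Fintype.card W = ∑ _w : W, 1 := by simp
    _ ≤ ∑ w, (F φ w).card := Finset.sum_le_sum fun w _ => one_le_card hconn w
    _ ≤ Fintype.card V := sum_card_le hdisj

/-- Key counting lemma: if every vertex of `H` has degree at least `d`, and `H` is a
minor of `G`, then `2|W| ≤ |V| + #{v : d ≤ deg_G v}`. -/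
lemma kc [DecidableRel G.Adj] [DecidableRel H.Adj] (h : H.IsMinorOf G) (d : ℕ)
    (hd : ∀ w, d ≤ H.degree w) :
    2 * Fintype.card W ≤ Fintype.card V + (Finset.univ.filter fun v => d ≤ G.degree v).card := by
  obtain ⟨φ, hconn, hdisj, hadj⟩ := h
  classical
  rcases isEmpty_or_nonempty W with hW | hW
  · simp [Fintype.card_eq_zero]
  haveI : Nonempty V := ⟨(branch_nonempty hconn (Classical.arbitrary W)).choose⟩
  set S : Finset W := Finset.univ.filter (fun w => (F φ w).card = 1) with hS
  have hsingle : ∀ w ∈ S, ∃ v, φ w = {v} := by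
    intro w hw
    rw [hS, Finset.mem_filter] at hw
    exact eq_singleton_of_card_one hw.2
  have hmap : ∀ w ∈ S, ∃ v, φ w = {v} ∧ v ∈ (Finset.univ.filter fun v => d ≤ G.degree v) := by
    intro w hw
    obtain ⟨v, hv⟩ := hsingle w hw
    exact ⟨v, hv, Finset.mem_filter.2 ⟨Finset.mem_univ _,
      le_trans (hd w) (degree_le_of_singleton hdisj hadj hv)⟩⟩
  have hScard : S.card ≤ (Finset.univ.filter fun v => d ≤ G.degree v).card := by
    choose g hg1 hg2 using hmap
    have : ∀ w ∈ S, (if h : w ∈ S then g w h else Classical.arbitrary V) ∈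
        (Finset.univ.filter fun v => d ≤ G.degree v) := by
      intro w hw; rw [dif_pos hw]; exact hg2 w hw
    refine Finset.card_le_card_of_injOn _ this ?_
    intro w1 h1 w2 h2 heq
    simp only [Finset.mem_coe] at h1 h2
    simp only [dif_pos h1, dif_pos h2] at heq
    have : g w1 h1 ∈ φ w2 := by rw [hg1 w2 h2, heq]; exact rfl
    exact mem_unique hdisj (by rw [hg1 w1 h1]; exact rfl) this
  have hlow : ∀ w : W, 2 ≤ (F φ w).card + (if w ∈ S then 1 else 0) := by
    intro w
    by_cases hw : w ∈ S
    · rw [if_pos hw]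
      have := one_le_card hconn w
      omega
    · rw [if_neg hw]
      have h1 := one_le_card hconn w
      have h2 : (F φ w).card ≠ 1 := by
        intro hc
        exact hw (by rw [hS]; exact Finset.mem_filter.2 ⟨Finset.mem_univ _, hc⟩)
      omega
  calc 2 * Fintype.card W = ∑ _w : W, 2 := by simp [mul_comm]
    _ ≤ ∑ w, ((F φ w).card + (if w ∈ S then 1 else 0)) := Finset.sum_le_sum fun w _ => hlow w
    _ = ∑ w, (F φ w).card + S.card := by
        rw [Finset.sum_add_distrib, Finset.sum_ite_mem, Finset.univ_inter, Finset.sum_const,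
          smul_eq_mul, mul_one]
    _ ≤ Fintype.card V + (Finset.univ.filter fun v => d ≤ G.degree v).card :=
        Nat.add_le_add (sum_card_le hdisj) hScard

end MinorAux

lemma adj_of_pair {V : Type*} {G : SimpleGraph V} {a b : V} (hne : a ≠ b)
    (h : (G.induce ({a, b} : Set V)).Connected) : G.Adj a b := by
  have ha : a ∈ ({a, b} : Set V) := Set.mem_insert _ _
  have hb : b ∈ ({a, b} : Set V) := Set.mem_insert_iff.2 (Or.inr rfl)
  obtain ⟨p⟩ := h.preconnected ⟨a, ha⟩ ⟨b, hb⟩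
  cases p with
  | nil => exact absurd rfl hne
  | cons hadj q =>
    rename_i v
    obtain ⟨x, hx⟩ := v
    have hadj' : G.Adj a x := hadj
    rcases hx with hx | hx
    · exact absurd (hx ▸ hadj') (G.irrefl)
    · exact hx ▸ hadj'

lemma surj_from_inj {α β : Type*} [DecidableEq β] {s : Finset α} {t : Finset β} (f : α → β)
    (hmaps : ∀ a ∈ s, f a ∈ t) (hinj : Set.InjOn f s) (hcard : t.card ≤ s.card) :
    ∀ b ∈ t, ∃ a ∈ s, f a = b := by
  have himg : s.image f ⊆ t := fun b hb => by
    obtain ⟨a, ha, rfl⟩ := Finset.mem_image.1 hb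
    exact hmaps a ha
  have heq : s.image f = t := Finset.eq_of_subset_of_card_le himg
    (by rw [Finset.card_image_of_injOn hinj]; exact hcard)
  intro b hb
  rw [← heq] at hb
  exact Finset.mem_image.1 hb

open MinorAux in
/-- The hard case: `K_4 □ P_2` is not a minor of `C_3 □ C_3`. -/
lemma notDA : ¬ GraphD.IsMinorOf GraphA := by
  intro h
  obtain ⟨φ, hconn, hdisj, hadj⟩ := h
  classical
  have hone : ∀ w, 1 ≤ (F φ w).card := one_le_card hconn
  have hsum : ∑ w, (F φ w).card ≤ 9 := by
    have h0 := MinorAux.sum_card_le (φ := φ) hdisj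
    have h9 : Fintype.card (Fin 3 × Fin 3) = 9 := by simp
    omega
  have hdegD0 : ∀ w, (GraphD.neighborFinset w).card = 4 := by decide
  have hdegA0 : ∀ v : Fin 3 × Fin 3, (GraphA.neighborFinset v).card = 4 := by decide
  have hdegD : ∀ (w : Fin 4 × Fin 2) (inst : Fintype (GraphD.neighborSet w)),
      (@SimpleGraph.neighborFinset _ GraphD w inst).card = 4 := by
    intro w inst
    convert hdegD0 w using 2
    congr 1
    exact Subsingleton.elim _ _
  have hdegA : ∀ (v : Fin 3 × Fin 3) (inst : Fintype (GraphA.neighborSet v)),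
      (@SimpleGraph.neighborFinset _ GraphA v inst).card = 4 := by
    intro v inst
    convert hdegA0 v using 2
    congr 1
    exact Subsingleton.elim _ _
  have step : ∀ (s : Finset (Fin 4 × Fin 2)), s.card ≤ ∑ w ∈ s, (F φ w).card := by
    intro s
    calc s.card = ∑ _w ∈ s, 1 := by simp
      _ ≤ ∑ w ∈ s, (F φ w).card := Finset.sum_le_sum fun w _ => hone w
  -- the key local argument
  have finish : ∀ (w1 : Fin 4 × Fin 2) (c : Fin 3 × Fin 3), φ w1 = {c} →
      ∀ x, GraphA.Adj c x → ∀ y, GraphA.Adj c y → x ≠ y →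
      ∃ wx wy, wx ≠ wy ∧ x ∈ φ wx ∧ y ∈ φ wy := by
    intro w1 c hc x hcx y hcy hxy
    obtain ⟨f, hf, hinj⟩ := nbr_map hdisj hadj hc
    have hsurj := surj_from_inj f (fun w' hw' => (hf w' hw').2) hinj
      (by rw [hdegD, hdegA])
    obtain ⟨wx, hwx, hfx⟩ := hsurj x (by rw [SimpleGraph.mem_neighborFinset]; exact hcx)
    obtain ⟨wy, hwy, hfy⟩ := hsurj y (by rw [SimpleGraph.mem_neighborFinset]; exact hcy)
    refine ⟨wx, wy, ?_, hfx ▸ (hf wx hwx).1, hfy ▸ (hf wy hwy).1⟩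
    intro hww
    exact hxy (hfx ▸ hfy ▸ hww ▸ rfl)
  by_cases hall : ∀ w, (F φ w).card = 1
  · -- all branch sets singletons; some vertex x of GraphA is unused
    have hsing : ∀ w, ∃ v, φ w = {v} := fun w => eq_singleton_of_card_one (hall w)
    choose g hg using hsing
    have hginj : Function.Injective g := by
      intro w1 w2 h12
      exact mem_unique hdisj (by rw [hg w1]; exact rfl) (by rw [hg w2, h12]; exact rfl)
    set U : Finset (Fin 3 × Fin 3) := Finset.univ.image g with hU
    have hUcard : U.card = 8 := by
      rw [hU, Finset.card_image_of_injective _ hginj]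
      simp
    obtain ⟨x, hx⟩ : ∃ x, x ∉ U := by
      by_contra hc
      push_neg at hc
      have : U = Finset.univ := Finset.eq_univ_iff_forall.2 hc
      rw [this] at hUcard
      simp at hUcard
    -- x has a neighbor u; u is used
    obtain ⟨u, hu⟩ : ∃ u, u ∈ GraphA.neighborFinset x := by
      have : 0 < (GraphA.neighborFinset x).card := by rw [hdegA]; norm_num
      exact Finset.card_pos.1 this
    have hux : GraphA.Adj x u := (SimpleGraph.mem_neighborFinset _ _ _).1 hu
    have huU : u ∈ U := by
      by_contra huU
      have h1 : u ∈ Finset.univ \ U := Finset.mem_sdiff.2 ⟨Finset.mem_univ _, huU⟩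
      have h2 : x ∈ Finset.univ \ U := Finset.mem_sdiff.2 ⟨Finset.mem_univ _, hx⟩
      have hcard : (Finset.univ \ U).card = 1 := by
        rw [Finset.card_sdiff_of_subset (Finset.subset_univ _), hUcard]
        simp
      have := Finset.one_lt_card.2 ⟨u, h1, x, h2, hux.ne'⟩
      omega
    obtain ⟨w1, _, hw1⟩ := Finset.mem_image.1 huU
    -- x is a neighbor of u = g w1
    have hxu : GraphA.Adj (g w1) x := by rw [hw1]; exact hux.symm
    obtain ⟨y, hy, hyx⟩ := Finset.exists_mem_ne
      (by rw [hdegA]; norm_num : 1 < (GraphA.neighborFinset (g w1)).card) x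
    have hgy : GraphA.Adj (g w1) y := (SimpleGraph.mem_neighborFinset _ _ _).1 hy
    obtain ⟨wx, wy, _, hxw, _⟩ := finish w1 (g w1) (hg w1) x hxu y hgy (Ne.symm hyx)
    -- but then x is used after all
    have : x = g wx := by
      have hx2 := hxw
      rw [hg wx] at hx2
      exact hx2
    exact hx (this ▸ Finset.mem_image_of_mem g (Finset.mem_univ wx))
  · -- some branch set has at least two vertices
    push_neg at hall
    obtain ⟨w0, hw0⟩ := hall
    have hw02 : 2 ≤ (F φ w0).card := by have := hone w0; omega
    have hsplit : (F φ w0).card + ∑ w ∈ Finset.univ.erase w0, (F φ w).card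
        = ∑ w, (F φ w).card :=
      Finset.add_sum_erase _ (fun w => (F φ w).card) (Finset.mem_univ w0)
    have herase : (Finset.univ.erase w0).card = 7 := by
      rw [Finset.card_erase_of_mem (Finset.mem_univ _)]
      simp
    have hstep1 := step (Finset.univ.erase w0)
    have hcard0 : (F φ w0).card = 2 := by omega
    -- every other branch set is a singleton
    have hrest : ∀ w, w ≠ w0 → (F φ w).card = 1 := by
      intro w hw
      by_contra hc
      have h2w : 2 ≤ (F φ w).card := by have := hone w; omega
      have hmem : w ∈ Finset.univ.erase w0 := Finset.mem_erase.2 ⟨hw, Finset.mem_univ _⟩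
      have hsplit2 : (F φ w).card + ∑ w' ∈ (Finset.univ.erase w0).erase w, (F φ w').card
          = ∑ w' ∈ Finset.univ.erase w0, (F φ w').card :=
        Finset.add_sum_erase _ (fun w' => (F φ w').card) hmem
      have herase2 : ((Finset.univ.erase w0).erase w).card = 6 := by
        rw [Finset.card_erase_of_mem hmem, herase]
      have := step ((Finset.univ.erase w0).erase w)
      omega
    -- the branch sets cover everything
    have hsum9 : ∑ w, (F φ w).card = 9 := by omega
    have hcover : ∀ x : Fin 3 × Fin 3, ∃ w, x ∈ φ w := by
      intro x
      have hbU : (Finset.univ.biUnion (F φ)).card = 9 := by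
        have h := Finset.card_biUnion (s := Finset.univ) (t := F φ)
          (fun w _ w' _ hne => Set.Finite.disjoint_toFinset.2 (hdisj hne))
        rw [h]
        exact hsum9
      have huniv : Finset.univ.biUnion (F φ) = Finset.univ := by
        apply Finset.eq_univ_of_card
        rw [hbU]; simp
      have hx : x ∈ Finset.univ.biUnion (F φ) := huniv ▸ Finset.mem_univ x
      obtain ⟨w, _, hw⟩ := Finset.mem_biUnion.1 hx
      exact ⟨w, mem_F.1 hw⟩
    -- φ w0 = {a, b} with a ≠ b, and a, b adjacent in GraphA
    obtain ⟨a, b, hab, hpair⟩ := eq_pair_of_card_two hcard0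
    have haab : GraphA.Adj a b := adj_of_pair hab (hpair ▸ hconn w0)
    -- a common neighbor c of a and b
    have hcn : ∀ a b : Fin 3 × Fin 3, GraphA.Adj a b →
        ∃ c, GraphA.Adj c a ∧ GraphA.Adj c b := by decide
    obtain ⟨c, hca, hcb⟩ := hcn a b haab
    obtain ⟨w1, hw1⟩ := hcover c
    have hw1ne : w1 ≠ w0 := by
      intro hww
      rw [hww, hpair] at hw1
      rcases hw1 with h | h
      · exact GraphA.irrefl (h ▸ hca)
      · exact GraphA.irrefl (h ▸ hcb)
    obtain ⟨v, hv⟩ := eq_singleton_of_card_one (hrest w1 hw1ne)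
    have hvc : v = c := by
      rw [hv] at hw1
      exact hw1.symm
    subst hvc
    obtain ⟨wa, wb, hwab, hwa, hwb⟩ := finish w1 v hv a hca b hcb hab
    have h1 : wa = w0 := mem_unique hdisj hwa (by rw [hpair]; exact Or.inl rfl)
    have h2 : wb = w0 := mem_unique hdisj hwb (by rw [hpair]; exact Or.inr rfl)
    exact hwab (h1.trans h2.symm)

/-- Among the four graphs `C_3 □ C_3`, `K_{1,3} □ P_3`, `K_{2,3} □ P_2`, and
`K_4 □ P_2`, no one of them is a minor of any other. -/
theorem forb_cp_plane_antichain :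
    (¬ GraphB.IsMinorOf GraphA) ∧ (¬ GraphC.IsMinorOf GraphA) ∧
    (¬ GraphD.IsMinorOf GraphA) ∧ (¬ GraphA.IsMinorOf GraphB) ∧
    (¬ GraphC.IsMinorOf GraphB) ∧ (¬ GraphD.IsMinorOf GraphB) ∧
    (¬ GraphA.IsMinorOf GraphC) ∧ (¬ GraphB.IsMinorOf GraphC) ∧
    (¬ GraphD.IsMinorOf GraphC) ∧ (¬ GraphA.IsMinorOf GraphD) ∧
    (¬ GraphB.IsMinorOf GraphD) ∧ (¬ GraphC.IsMinorOf GraphD) := by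
  refine ⟨?_, ?_, notDA, ?_, ?_, ?_, ?_, ?_, ?_, ?_, ?_, ?_⟩
  · -- B not minor of A : 12 > 9
    intro h
    have := MinorAux.card_le_of_minor h
    revert this
    decide
  · -- C not minor of A : 10 > 9
    intro h
    have := MinorAux.card_le_of_minor h
    revert this
    decide
  · -- A not minor of B : degree count, d = 4
    intro h
    have := MinorAux.kc h 4 (by decide)
    revert this
    decide
  · -- C not minor of B : d = 3
    intro h
    have := MinorAux.kc h 3 (by decide)
    revert this
    decide
  · -- D not minor of B : d = 4
    intro h
    have := MinorAux.kc h 4 (by decide)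
    revert this
    decide
  · -- A not minor of C : d = 4
    intro h
    have := MinorAux.kc h 4 (by decide)
    revert this
    decide
  · -- B not minor of C : 12 > 10
    intro h
    have := MinorAux.card_le_of_minor h
    revert this
    decide
  · -- D not minor of C : d = 4
    intro h
    have := MinorAux.kc h 4 (by decide)
    revert this
    decide
  · -- A not minor of D : 9 > 8
    intro h
    have := MinorAux.card_le_of_minor h
    revert this
    decide
  · -- B not minor of D : 12 > 8
    intro h
    have := MinorAux.card_le_of_minor h
    revert this
    decide
  · -- C not minor of D : 10 > 8
    intro h
    have := MinorAux.card_le_of_minor h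
    revert this
    decide
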